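/- For every integer m ≥ 2 there exist P, Q ∈ ℤ with P·Q ≠ 0, a prime p with p ∤ gcd(P,Q), and an integer r ≥ 1, such that L(P,Q,p^{−r}) = ⟨m⟩ = mℕ. That is, every cyclic subsemigroup ⟨m⟩ of ℕ with m ≥ 2 arises as a local Lucas semigroup at a regular prime. -/

import Mathlib

/-- The Lucas sequence `U_n(P,Q)`: `U_0 = 0`, `U_1 = 1`,
`U_{n+2} = P·U_{n+1} − Q·U_n`. -/
def lucasU (P Q : ℤ) : ℕ → ℤ
  | 0 => 0
  | 1 => 1
  | n + 2 => P * lucasU P Q (n + 1) - Q * lucasU P Q n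

/-- The Lucas semigroup `L(P,Q,R) = {n ∈ ℕ : U_n(P,Q)·R ∈ ℤ}`. -/
def lucasSG (P Q : ℤ) (R : ℚ) : Set ℕ :=
  {n : ℕ | ∃ k : ℤ, (lucasU P Q n : ℚ) * R = (k : ℚ)}

/-- The local Lucas semigroup `L(P,Q,p^{-r}) = {n ∈ ℕ : ν_p(U_n) ≥ r}`,
equivalently the set of `n` with `U_n · p^{-r} ∈ ℤ`. -/
def localLucasSG (P Q : ℤ) (p : ℕ) (r : ℤ) : Set ℕ :=
  lucasSG P Q ((p : ℚ) ^ (-r))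

lemma lucasU_geom (a : ℤ) (n : ℕ) :
    lucasU (a + 1) a n = ∑ i ∈ Finset.range n, a ^ i := by
  induction n using Nat.strong_induction_on with
  | _ n ih =>
    match n with
    | 0 => simp [lucasU]
    | 1 => simp [lucasU]
    | n + 2 =>
      rw [lucasU, ih (n+1) (by omega), ih n (by omega),
        Finset.sum_range_succ (n := n+1), Finset.sum_range_succ (n := n)]
      ring

lemma mem_localLucas_one {P Q : ℤ} {p : ℕ} (hp : p ≠ 0) (n : ℕ) :
    n ∈ localLucasSG P Q p (1 : ℤ) ↔ (p : ℤ) ∣ lucasU P Q n := by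
  have hp' : ((p : ℚ)) ≠ 0 := by exact_mod_cast hp
  constructor
  · rintro ⟨k, hk⟩
    refine ⟨k, ?_⟩
    have : (lucasU P Q n : ℚ) = (p : ℚ) * k := by
      rw [zpow_neg, zpow_one] at hk
      field_simp at hk
      linarith [hk]
    exact_mod_cast this
  · rintro ⟨k, hk⟩
    refine ⟨k, ?_⟩
    rw [zpow_neg, zpow_one, hk]
    push_cast
    field_simp

/-- Every cyclic semigroup `⟨m⟩ = mℕ` with `m ≥ 2` arises as a local Lucas
semigroup at a regular prime. -/
theorem exists_localLucasSG_eq_cyclic (m : ℕ) (hm : 2 ≤ m) :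
    ∃ (P Q : ℤ) (p r : ℕ), P * Q ≠ 0 ∧ p.Prime ∧ ¬ p ∣ Int.gcd P Q ∧ 1 ≤ r ∧
      localLucasSG P Q p (r : ℤ) =
        (AddSubmonoid.closure ({m} : Set ℕ) : Set ℕ) := by
  obtain ⟨p, hp, hpm, hmod⟩ := Nat.exists_prime_gt_modEq_one (k := m) m (by omega)
  haveI : Fact p.Prime := ⟨hp⟩
  -- m divides p - 1 = card of units
  have hdvd : m ∣ Nat.card (ZMod p)ˣ := by
    rw [Nat.card_eq_fintype_card, ZMod.card_units_eq_totient, Nat.totient_prime hp]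
    have := (Nat.modEq_iff_dvd' (by omega)).mp hmod.symm
    exact this
  obtain ⟨g, hg⟩ := IsCyclic.exists_ofOrder_eq_natCard (α := (ZMod p)ˣ)
  have hord0 : orderOf g ≠ 0 := by
    rw [hg]; exact Nat.card_ne_zero.mpr ⟨inferInstance, inferInstance⟩
  set u : (ZMod p)ˣ := g ^ (orderOf g / m) with hu
  have hum : orderOf u = m := by
    rw [hu]
    exact orderOf_pow_orderOf_div hord0 (by rw [hg]; exact hdvd)
  set A : ZMod p := (u : ZMod p) with hA
  have hAm : orderOf A = m := by rw [hA, orderOf_units, hum]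
  have hA0 : A ≠ 0 := u.ne_zero
  have hA1 : A ≠ 1 := by
    intro h
    rw [h, orderOf_one] at hAm; omega
  set a : ℤ := (A.val : ℤ) with ha
  have hcast : ((a : ℤ) : ZMod p) = A := by
    rw [ha]; push_cast; simp [ZMod.natCast_val, ZMod.cast_id]
  refine ⟨a + 1, a, p, 1, ?_, hp, ?_, le_refl 1, ?_⟩
  · -- P*Q ≠ 0
    have : a ≠ 0 := by
      intro h
      apply hA0
      rw [← hcast, h]; simp
    have ha0 : 0 ≤ a := by rw [ha]; positivity
    intro h
    rcases mul_eq_zero.mp h with h' | h'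
    · omega
    · exact this h'
  · -- regular
    intro hdg
    have h1 : (p : ℤ) ∣ a := by
      have h2 : ((p : ℤ)) ∣ (Int.gcd (a+1) a : ℤ) := Int.natCast_dvd_natCast.mpr hdg
      exact h2.trans (Int.gcd_dvd_right _ _)
    have : ((a : ℤ) : ZMod p) = 0 := (ZMod.intCast_zmod_eq_zero_iff_dvd a p).mpr h1
    rw [hcast] at this
    exact hA0 this
  · ext n
    rw [Nat.cast_one, mem_localLucas_one hp.ne_zero, lucasU_geom,
      SetLike.mem_coe, AddSubmonoid.mem_closure_singleton]
    have hsum : (p : ℤ) ∣ ∑ i ∈ Finset.range n, a ^ i ↔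
        (∑ i ∈ Finset.range n, A ^ i) = 0 := by
      rw [← ZMod.intCast_zmod_eq_zero_iff_dvd]
      push_cast [hcast]
      rfl
    have hgeom : (∑ i ∈ Finset.range n, A ^ i) = 0 ↔ A ^ n = 1 := by
      constructor
      · intro h
        have := geom_sum_mul A n
        rw [h, zero_mul] at this
        have : A ^ n - 1 = 0 := this.symm
        linear_combination this
      · intro h
        have := geom_sum_mul A n
        rw [h, sub_self] at this
        rcases mul_eq_zero.mp this with h' | h'
        · exact h'
        · exact absurd (by linear_combination h') hA1
    rw [hsum, hgeom, ← hAm, orderOf_dvd_iff_pow_eq_one.symm]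
    constructor
    · rintro ⟨k, rfl⟩; exact ⟨k, by rw [smul_eq_mul, mul_comm]⟩
    · rintro ⟨k, rfl⟩; exact ⟨k, by rw [smul_eq_mul, mul_comm]⟩
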